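/- arXiv:1803.07499 — 3 statements merged into one kernel-verified Lean document; each statement's English description precedes it below -/
import Mathlib

section
/- Let s ∈ (0,1), and let f : ℝ → ℝ be a C¹ function with f ≥ 0 everywhere, whose derivative f' satisfies the Hölder condition |f'(x) - f'(y)| ≤ H·|x - y|^s for all x, y. Then there is a constant C depending only on s such that for every x ∈ ℝ, |f'(x)| ≤ C · H^{1/(1+s)} · (f(x))^{s/(1+s)}. -/
open Real Set

/-- Key one-sided lemma: under the hypotheses with `H > 0`,
`f' x ≤ 2 * H ^ (1/(1+s)) * (f x) ^ (s/(1+s))`. -/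
lemma key_onesided (s : ℝ) (hs0 : 0 < s) (hs1 : s < 1)
    (f f' : ℝ → ℝ) (H : ℝ) (hH : 0 < H)
    (hd : ∀ x, HasDerivAt f (f' x) x)
    (hf0 : ∀ x, 0 ≤ f x)
    (hol : ∀ x y, |f' x - f' y| ≤ H * |x - y| ^ s)
    (x : ℝ) : f' x ≤ 2 * H ^ (1 / (1 + s)) * (f x) ^ (s / (1 + s)) := by
  have h1s : (0:ℝ) < 1 + s := by linarith
  have hRHS : 0 ≤ 2 * H ^ (1 / (1 + s)) * (f x) ^ (s / (1 + s)) := by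
    have := hf0 x
    positivity
  by_cases ha : f' x ≤ 0
  · linarith
  push_neg at ha
  set a : ℝ := f' x with ha_def
  have ha2 : (0:ℝ) < a / 2 := by linarith
  set r : ℝ := (a / (2 * H)) ^ (1 / s) with hr_def
  have hbase : (0:ℝ) < a / (2 * H) := by positivity
  have hr0 : 0 < r := Real.rpow_pos_of_pos hbase _
  have hrs : r ^ s = a / (2 * H) := by
    rw [hr_def, one_div, Real.rpow_inv_rpow hbase.le (ne_of_gt hs0)]
  -- derivative lower bound on [x - r, x]
  have hderiv_lb : ∀ t ∈ Icc (x - r) x, a / 2 ≤ f' t := by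
    intro t ht
    have h1 : |f' x - f' t| ≤ H * |x - t| ^ s := hol x t
    have hxt0 : 0 ≤ x - t := by linarith [ht.2]
    have hxtr : x - t ≤ r := by linarith [ht.1]
    have h2 : |x - t| ^ s ≤ r ^ s := by
      rw [abs_of_nonneg hxt0]
      exact Real.rpow_le_rpow hxt0 hxtr hs0.le
    have h3 : H * |x - t| ^ s ≤ H * r ^ s :=
      mul_le_mul_of_nonneg_left h2 hH.le
    have h4 : H * r ^ s = a / 2 := by
      rw [hrs]; field_simp
    have h5 : f' x - f' t ≤ a / 2 :=
      le_trans (le_abs_self _) (by linarith)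
    linarith
  -- monotonicity of g t = f t - (a/2) t on [x - r, x]
  have hg : ∀ t : ℝ, HasDerivAt (fun u => f u - a / 2 * u) (f' t - a / 2) t := by
    intro t
    have h1 : HasDerivAt (fun u : ℝ => a / 2 * u) (a / 2) t := by
      simpa using (hasDerivAt_id t).const_mul (a / 2)
    exact (hd t).sub h1
  have mono : MonotoneOn (fun u => f u - a / 2 * u) (Icc (x - r) x) := by
    apply monotoneOn_of_deriv_nonneg (convex_Icc _ _)
    · exact Continuous.continuousOn (by
        have hfc : Continuous f :=
          continuous_iff_continuousAt.mpr fun t => (hd t).continuousAt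
        exact hfc.sub (continuous_const.mul continuous_id))
    · intro t _
      exact ((hg t).differentiableAt).differentiableWithinAt
    · intro t ht
      have ht' : t ∈ Icc (x - r) x := interior_subset ht
      rw [(hg t).deriv]
      linarith [hderiv_lb t ht']
  have hmem1 : x - r ∈ Icc (x - r) x := ⟨le_refl _, by linarith⟩
  have hmem2 : x ∈ Icc (x - r) x := ⟨by linarith, le_refl _⟩
  have hmono := mono hmem1 hmem2 (by linarith : x - r ≤ x)
  simp only at hmono
  -- f (x - r) - a/2 * (x - r) ≤ f x - a/2 * x
  have hK : a / 2 * r ≤ f x := by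
    have h0 := hf0 (x - r)
    nlinarith [hmono]
  -- algebra with rpow
  have hHs : (0:ℝ) < H ^ (1 / s) := Real.rpow_pos_of_pos hH _
  have h1 : (a / 2) ^ ((1 + s) / s) ≤ f x * H ^ (1 / s) := by
    have hrval : r = (a / 2) ^ (1 / s) / H ^ (1 / s) := by
      rw [hr_def]
      rw [show a / (2 * H) = (a / 2) / H by ring]
      rw [Real.div_rpow ha2.le hH.le]
    have hexp : (1 + s) / s = 1 + 1 / s := by field_simp; ring
    rw [hexp, Real.rpow_add ha2, Real.rpow_one]
    rw [hrval] at hK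
    calc a / 2 * (a / 2) ^ (1 / s)
        = (a / 2 * ((a / 2) ^ (1 / s) / H ^ (1 / s))) * H ^ (1 / s) := by
          field_simp
      _ ≤ f x * H ^ (1 / s) := mul_le_mul_of_nonneg_right hK hHs.le
  have h2 : a / 2 ≤ (f x * H ^ (1 / s)) ^ (s / (1 + s)) := by
    have hmain := Real.rpow_le_rpow (Real.rpow_nonneg ha2.le _) h1
      (by positivity : (0:ℝ) ≤ s / (1 + s))
    have hLHS : ((a / 2) ^ ((1 + s) / s)) ^ (s / (1 + s)) = a / 2 := by
      rw [← Real.rpow_mul ha2.le]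
      rw [show (1 + s) / s * (s / (1 + s)) = 1 by field_simp]
      exact Real.rpow_one _
    rwa [hLHS] at hmain
  have h3 : (f x * H ^ (1 / s)) ^ (s / (1 + s))
      = f x ^ (s / (1 + s)) * H ^ (1 / (1 + s)) := by
    rw [Real.mul_rpow (hf0 x) hHs.le, ← Real.rpow_mul hH.le]
    congr 1
    field_simp
  rw [h3] at h2
  linarith

theorem stmt3 (s : ℝ) (hs : s ∈ Set.Ioo (0:ℝ) 1) :
    ∃ C : ℝ, 0 < C ∧
      ∀ (f f' : ℝ → ℝ) (H : ℝ),
        (∀ x, HasDerivAt f (f' x) x) →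
        Continuous f' →
        (∀ x, 0 ≤ f x) →
        (∀ x y, |f' x - f' y| ≤ H * |x - y| ^ s) →
        ∀ x, |f' x| ≤ C * H ^ (1 / (1 + s)) * (f x) ^ (s / (1 + s)) := by
  obtain ⟨hs0, hs1⟩ := hs
  refine ⟨2, by norm_num, fun f f' H hd hcont hf0 hol x => ?_⟩
  have h1s : (0:ℝ) < 1 + s := by linarith
  rcases lt_trichotomy H 0 with hH | hH | hH
  · -- H < 0 : hypothesis is contradictory
    exfalso
    have := hol 0 1
    have h01 : |(0:ℝ) - 1| ^ s = 1 := by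
      norm_num
    rw [h01, mul_one] at this
    linarith [abs_nonneg (f' 0 - f' 1)]
  · -- H = 0 : f' is constant, hence zero
    subst hH
    have hconst : ∀ t : ℝ, f' t = f' 0 := by
      intro t
      have := hol t 0
      rw [zero_mul] at this
      have := abs_nonpos_iff.mp this
      linarith [sub_eq_zero.mp this]
    have hzero : f' 0 = 0 := by
      by_contra hc
      -- f t = f 0 + f' 0 * t
      have hlin : ∀ t : ℝ, f t = f 0 + f' 0 * t := by
        intro t
        have hg : ∀ u : ℝ, HasDerivAt (fun v => f v - f' 0 * v) 0 u := by
          intro u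
          have h1 : HasDerivAt (fun v : ℝ => f' 0 * v) (f' 0) u := by
            simpa using (hasDerivAt_id u).const_mul (f' 0)
          have h2 := (hd u).sub h1
          rwa [hconst u, sub_self] at h2
        have hdiff : Differentiable ℝ (fun v => f v - f' 0 * v) :=
          fun u => (hg u).differentiableAt
        have hder0 : ∀ u, deriv (fun v => f v - f' 0 * v) u = 0 :=
          fun u => (hg u).deriv
        have := is_const_of_deriv_eq_zero hdiff hder0 t 0
        linarith [this]
      have ht := hlin (-(f 0 + 1) / f' 0)
      rw [mul_div_cancel₀ _ hc] at ht
      have := hf0 (-(f 0 + 1) / f' 0)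
      rw [ht] at this
      linarith
    have hall : ∀ t, f' t = 0 := fun t => (hconst t).trans hzero
    rw [hall x, abs_zero]
    rw [Real.zero_rpow (by positivity : 1 / (1 + s) ≠ 0)]
    simp
  · -- H > 0 : main case
    have hub : f' x ≤ 2 * H ^ (1 / (1 + s)) * (f x) ^ (s / (1 + s)) :=
      key_onesided s hs0 hs1 f f' H hH hd hf0 hol x
    have hlb : -(f' x) ≤ 2 * H ^ (1 / (1 + s)) * (f x) ^ (s / (1 + s)) := by
      set g : ℝ → ℝ := fun t => f (-t) with hg_def
      set g' : ℝ → ℝ := fun t => -(f' (-t)) with hg'_def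
      have hdg : ∀ t, HasDerivAt g (g' t) t := by
        intro t
        have h1 : HasDerivAt (fun u : ℝ => -u) (-1) t := by
          exact (hasDerivAt_id t).neg
        have h2 := (hd (-t)).comp t h1
        simpa [hg_def, hg'_def, mul_comm, Function.comp_def] using h2
      have hg0 : ∀ t, 0 ≤ g t := fun t => hf0 (-t)
      have holg : ∀ u v, |g' u - g' v| ≤ H * |u - v| ^ s := by
        intro u v
        have := hol (-v) (-u)
        have habs : |(-v) - (-u)| = |u - v| := by
          rw [show (-v) - (-u) = u - v by ring]
        rw [habs] at this
        calc |g' u - g' v| = |f' (-v) - f' (-u)| := by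
              simp only [hg'_def]
              rw [show -(f' (-u)) - -(f' (-v)) = f' (-v) - f' (-u) by ring]
          _ ≤ H * |u - v| ^ s := this
      have := key_onesided s hs0 hs1 g g' H hH hdg hg0 holg (-x)
      simpa [hg_def, hg'_def] using this
    rw [abs_le]
    constructor <;> linarith
end

section
/- For every y ∈ (0,1), sup over ε > 0 of [1/((1 + ln_+(1/ε))·(y + ε))] ≤ C/(y·(1 + |ln y|)) + 1/(1+y), for some universal constant C > 0. -/
noncomputable def lnPlus (t : ℝ) : ℝ := max (Real.log t) 0

lemma aux_tlog (t : ℝ) (h0 : 0 < t) (h1 : t ≤ 1) :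
    t * (1 - Real.log t) ≤ 3 * Real.sqrt t := by
  have hs : 0 < Real.sqrt t := Real.sqrt_pos.2 h0
  have hsq : Real.sqrt t ^ 2 = t := Real.sq_sqrt h0.le
  have hts : t ≤ Real.sqrt t := by nlinarith
  have hlog : Real.log (1 / Real.sqrt t) ≤ 1 / Real.sqrt t - 1 :=
    Real.log_le_sub_one_of_pos (by positivity)
  have hls : Real.log (Real.sqrt t) = Real.log t / 2 := Real.log_sqrt h0.le
  rw [Real.log_div one_ne_zero hs.ne', Real.log_one, hls] at hlog
  -- hlog : 0 - log t / 2 ≤ 1/√t - 1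
  have h2 : -Real.log t ≤ 2 * (1 / Real.sqrt t) := by linarith
  have h3 : t * (2 * (1 / Real.sqrt t)) = 2 * Real.sqrt t := by
    field_simp
    nlinarith
  nlinarith [mul_le_mul_of_nonneg_left h2 h0.le]

theorem stmt5 : ∃ C : ℝ, 0 < C ∧
    ∀ y ∈ Set.Ioo (0:ℝ) 1, ∀ ε : ℝ, 0 < ε →
      1 / ((1 + lnPlus (1 / ε)) * (y + ε)) ≤
        C / (y * (1 + |Real.log y|)) + 1 / (1 + y) := by
  refine ⟨3, by norm_num, ?_⟩
  rintro y ⟨hy0, hy1⟩ ε hε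
  have hly : Real.log y < 0 := Real.log_neg hy0 hy1
  have habs : |Real.log y| = -Real.log y := abs_of_neg hly
  have hden : 0 < y * (1 + |Real.log y|) := by positivity
  rcases le_or_gt 1 ε with h1 | h1
  · -- ε ≥ 1 : lnPlus (1/ε) = 0
    have hln : lnPlus (1 / ε) = 0 := by
      have : Real.log (1 / ε) ≤ 0 := Real.log_nonpos (by positivity) (by
        rw [div_le_one hε]; exact h1)
      unfold lnPlus; exact max_eq_right this
    rw [hln]
    have h2 : 1 / (y + ε) ≤ 1 / (1 + y) := by
      apply one_div_le_one_div_of_le (by linarith)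
      linarith
    have h3 : (0:ℝ) ≤ 3 / (y * (1 + |Real.log y|)) := by positivity
    calc 1 / ((1 + 0) * (y + ε)) = 1 / (y + ε) := by ring_nf
      _ ≤ 1 / (1 + y) := h2
      _ ≤ 3 / (y * (1 + |Real.log y|)) + 1 / (1 + y) := by linarith
  · -- ε < 1
    have hle : Real.log ε < 0 := Real.log_neg hε h1
    have hln : lnPlus (1 / ε) = -Real.log ε := by
      unfold lnPlus
      rw [one_div, Real.log_inv]
      exact max_eq_left (by linarith)
    rw [hln, habs]
    have hA : 0 < (1 + -Real.log ε) * (y + ε) := mul_pos (by linarith) (by linarith)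
    have hB : 0 < y * (1 + -Real.log y) := by nlinarith
    have key : y * (1 + -Real.log y) ≤ 3 * ((1 + -Real.log ε) * (y + ε)) := by
      rcases le_or_gt y (ε ^ 2) with h2 | h2
      · -- y ≤ ε² : y(1-log y) ≤ 3√y ≤ 3ε
        have hsy : Real.sqrt y ≤ ε := by
          have := Real.sqrt_le_sqrt h2
          rwa [Real.sqrt_sq hε.le] at this
        have := aux_tlog y hy0 hy1.le
        nlinarith
      · -- ε² < y : 2 log ε < log y
        have hlel : 2 * Real.log ε < Real.log y := by
          have := Real.log_lt_log (by positivity) h2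
          rwa [Real.log_pow] at this
        nlinarith
    have hmain : 1 / ((1 + -Real.log ε) * (y + ε)) ≤ 3 / (y * (1 + -Real.log y)) := by
      rw [div_le_div_iff₀ hA hB]
      nlinarith
    have h4 : (0:ℝ) ≤ 1 / (1 + y) := by positivity
    linarith
end

section
/- For all y ≥ 0 and all real numbers a, b with |a| ≤ b, one has y² + (2 + y·a)² ≥ (1 + y²)/(1 + b²). -/
theorem stmt7 (y a b : ℝ) (hy : 0 ≤ y) (hab : |a| ≤ b) :
    (1 + y ^ 2) / (1 + b ^ 2) ≤ y ^ 2 + (2 + y * a) ^ 2 := by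
  have hb : 0 ≤ b := (abs_nonneg a).trans hab
  have hya : -(y*b) ≤ y*a := by nlinarith [neg_abs_le a, mul_le_mul_of_nonneg_left (neg_abs_le a) hy]
  rw [div_le_iff₀ (by positivity)]
  rcases le_or_gt (y*b) 2 with h | h
  · have hsq : (2 - y*b)^2 ≤ (2 + y*a)^2 := by
      apply sq_le_sq' <;> nlinarith [mul_le_mul_of_nonneg_left hab hy]
    nlinarith [sq_nonneg (1 - y*b), mul_nonneg (sq_nonneg b) (sub_nonneg.2 hsq), sq_nonneg b, hsq]
  · nlinarith [sq_nonneg (2 + y*a), sq_nonneg b, mul_nonneg (sq_nonneg b) (sq_nonneg (2+y*a)), sq_nonneg (y*b - 2)]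
end
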